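/- Let D be a pretannakian category over k. Assume: (i) D is subterminal, i.e. for every pretannakian category C over k, any two tensor functors C → D are isomorphic as symmetric monoidal functors; and (ii) D is a Bezrukavnikov category, i.e. for every surjective tensor functor C₁ → C₂ between pretannakian categories over k and every tensor functor C₁ → D, there exists a tensor functor C₂ → D. Then D is incompressible: every surjective tensor functor from D to a pretannakian category over k is an equivalence (equivalently, every tensor functor out of D is injective). -/

import Mathlib

open CategoryTheory CategoryTheory.Limits CategoryTheory.MonoidalCategory

universe u

/-- A pretannakian category over `k`: a (small, up to equivalence every essentially small
category is of this form) symmetric monoidal `k`-linear abelian rigid category in which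
`k ⟶ End (𝟙)` is bijective and every object has finite length. -/
structure PreTannakian (k : Type u) [Field k] where
  C : Type u
  [cat : SmallCategory C]
  [abelian : Abelian C]
  [linear : Linear k C]
  [monoidal : MonoidalCategory C]
  [symmetric : SymmetricCategory C]
  [monoidalPreadditive : MonoidalPreadditive C]
  [monoidalLinear : MonoidalLinear k C]
  [rigid : RigidCategory C]
  endBij : Function.Bijective fun a : k => a • (𝟙 (𝟙_ C))
  finiteLength : ∀ X : C, IsNoetherianObject X ∧ IsArtinianObject X

attribute [instance] PreTannakian.cat PreTannakian.abelian PreTannakian.linear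
  PreTannakian.monoidal PreTannakian.symmetric PreTannakian.monoidalPreadditive
  PreTannakian.monoidalLinear PreTannakian.rigid

/-- A tensor functor between pretannakian categories over `k`: a `k`-linear exact symmetric
strong monoidal functor. -/
structure TensorFunctor {k : Type u} [Field k] (C D : PreTannakian k) where
  toFunctor : C.C ⥤ D.C
  [additive : toFunctor.Additive]
  [linear : toFunctor.Linear k]
  [braided : toFunctor.Braided]
  [preservesFiniteLimits : PreservesFiniteLimits toFunctor]
  [preservesFiniteColimits : PreservesFiniteColimits toFunctor]

attribute [instance] TensorFunctor.additive TensorFunctor.linear TensorFunctor.braided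
  TensorFunctor.preservesFiniteLimits TensorFunctor.preservesFiniteColimits

/-- `W` is a subquotient of `Z`: a quotient of a subobject of `Z`. -/
def IsSubquotient {A : Type u} [Category A] (W Z : A) : Prop :=
  ∃ (S : A) (i : S ⟶ Z) (p : S ⟶ W), Mono i ∧ Epi p

/-- A tensor functor is surjective if every object of the target is a subquotient of an
object in the image. -/
def TensorFunctor.Surjective {k : Type u} [Field k] {C D : PreTannakian k}
    (F : TensorFunctor C D) : Prop :=
  ∀ Z : D.C, ∃ X : C.C, IsSubquotient Z (F.toFunctor.obj X)

/- ### Auxiliary material -/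

namespace IncompressibleAux

set_option maxHeartbeats 1000000

variable {k : Type u} [Field k]

section OneCat

variable {P : PreTannakian k}

lemma isZero_tensor_left {X Y : P.C} (h : IsZero X) : IsZero (X ⊗ Y) := by
  rw [IsZero.iff_id_eq_zero] at h ⊢
  calc 𝟙 (X ⊗ Y) = (𝟙 X) ▷ Y := by simp
    _ = (0 : X ⟶ X) ▷ Y := by rw [h]
    _ = 0 := MonoidalPreadditive.zero_whiskerRight

lemma isZero_of_mono_eq_zero {X Y : P.C} (f : X ⟶ Y) [Mono f] (h : f = 0) : IsZero X := by
  rw [IsZero.iff_id_eq_zero]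
  apply (cancel_mono f).1
  rw [h]; simp

lemma isZero_of_epi_eq_zero {X Y : P.C} (f : X ⟶ Y) [Epi f] (h : f = 0) : IsZero Y := by
  rw [IsZero.iff_id_eq_zero]
  apply (cancel_epi f).1
  rw [h]; simp

lemma unit_notZero (P : PreTannakian k) : ¬ IsZero (𝟙_ P.C) := by
  intro h
  have h01 : (fun a : k => a • (𝟙 (𝟙_ P.C))) 0 = (fun a : k => a • (𝟙 (𝟙_ P.C))) 1 :=
    h.eq_of_src _ _
  exact one_ne_zero (P.endBij.1 h01).symm

lemma unit_mono_dichotomy {U : P.C} (u : U ⟶ 𝟙_ P.C) [Mono u] : u = 0 ∨ IsIso u := by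
  set Q := cokernel u with hQdef
  set q : 𝟙_ P.C ⟶ Q := cokernel.π u with hqdef
  -- Step a : U ⊗ Q = 0
  have key0 : u ▷ (𝟙_ P.C) ≫ (𝟙_ P.C) ◁ q = 0 := by
    have h1 : u ▷ (𝟙_ P.C) = (ρ_ U).hom ≫ u ≫ (ρ_ (𝟙_ P.C)).inv := by
      rw [← cancel_mono (ρ_ (𝟙_ P.C)).hom]
      simp [MonoidalCategory.rightUnitor_naturality]
    have h2 : (𝟙_ P.C) ◁ q = (λ_ (𝟙_ P.C)).hom ≫ q ≫ (λ_ Q).inv := by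
      rw [← cancel_mono (λ_ Q).hom]
      simp [MonoidalCategory.leftUnitor_naturality]
    have h3 : u ≫ q = 0 := cokernel.condition u
    rw [h1, h2]
    simp [MonoidalCategory.unitors_equal, reassoc_of% h3]
  have hUQ : IsZero (U ⊗ Q) := by
    haveI : Mono ((tensorRight Q).map u) := by
      haveI := Functor.preservesMonomorphisms_of_adjunction (tensorRightAdjunction (ᘁQ) Q)
      exact Functor.map_mono _ u
    have hmono : Mono (u ▷ Q) := this
    haveI : Epi ((tensorLeft U).map q) := by
      haveI := Functor.preservesEpimorphisms_of_adjunction (tensorLeftAdjunction (ᘁU) U)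
      exact Functor.map_epi _ q
    have hepi : Epi (U ◁ q) := this
    have hz : U ◁ q ≫ u ▷ Q = 0 := by rw [whisker_exchange]; exact key0
    have : u ▷ Q = 0 := by
      apply (cancel_epi (U ◁ q)).1
      rw [hz, comp_zero]
    rw [IsZero.iff_id_eq_zero]
    apply (cancel_mono (u ▷ Q)).1
    rw [this]; simp
  -- Step b : U ⊗ Qᘁ = 0
  have hUQd : IsZero (U ⊗ (Qᘁ)) := by
    have i1 : IsZero (((U ⊗ Q) ⊗ (Qᘁ)) ⊗ (Qᘁ)) := isZero_tensor_left (isZero_tensor_left hUQ)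
    have iso : U ⊗ ((Qᘁ) ⊗ (Q ⊗ (Qᘁ))) ≅ ((U ⊗ Q) ⊗ (Qᘁ)) ⊗ (Qᘁ) :=
      (whiskerLeftIso U ((α_ _ _ _).symm ≪≫ whiskerRightIso (β_ (Qᘁ) Q) (Qᘁ))) ≪≫
        (α_ _ _ _).symm ≪≫ whiskerRightIso (α_ _ _ _).symm (Qᘁ)
    have hZbig : IsZero (U ⊗ ((Qᘁ) ⊗ (Q ⊗ (Qᘁ)))) := i1.of_iso iso
    have triangle := ExactPairing.coevaluation_evaluation Q (Qᘁ)
    have hone : 𝟙 (Qᘁ) = (ρ_ (Qᘁ)).inv ≫ ((Qᘁ) ◁ η_ Q (Qᘁ)) ≫ (α_ (Qᘁ) Q (Qᘁ)).inv ≫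
        (ε_ Q (Qᘁ) ▷ (Qᘁ)) ≫ (λ_ (Qᘁ)).hom := by
      rw [reassoc_of% triangle]
      simp
    have h2 : U ◁ ((Qᘁ) ◁ η_ Q (Qᘁ)) = 0 := hZbig.eq_zero_of_tgt _
    rw [IsZero.iff_id_eq_zero]
    calc 𝟙 (U ⊗ (Qᘁ)) = U ◁ (𝟙 (Qᘁ)) := by simp
      _ = U ◁ ((ρ_ (Qᘁ)).inv ≫ ((Qᘁ) ◁ η_ Q (Qᘁ)) ≫ (α_ (Qᘁ) Q (Qᘁ)).inv ≫
          (ε_ Q (Qᘁ) ▷ (Qᘁ)) ≫ (λ_ (Qᘁ)).hom) := by rw [← hone]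
      _ = (U ◁ (ρ_ (Qᘁ)).inv) ≫ (U ◁ ((Qᘁ) ◁ η_ Q (Qᘁ))) ≫
          (U ◁ ((α_ (Qᘁ) Q (Qᘁ)).inv ≫ (ε_ Q (Qᘁ) ▷ (Qᘁ)) ≫ (λ_ (Qᘁ)).hom)) := by
            simp only [MonoidalCategory.whiskerLeft_comp]
      _ = 0 := by rw [h2]; simp
  -- Step c : q ▷ Qᘁ is an isomorphism
  have hepiβ : Epi (q ▷ (Qᘁ)) := by
    haveI := Functor.preservesEpimorphisms_of_adjunction (tensorRightAdjunction (Qᘁ) ((Qᘁ)ᘁ))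
    have : Epi ((tensorRight (Qᘁ)).map q) := Functor.map_epi _ q
    exact this
  have hmonoβ : Mono (q ▷ (Qᘁ)) := by
    haveI h1 : PreservesLimitsOfSize.{0,0} (tensorRight (Qᘁ)) :=
      (tensorRightAdjunction Q (Qᘁ)).rightAdjoint_preservesLimits
    have hu : IsLimit (KernelFork.ofι u (cokernel.condition u)) :=
      Abelian.monoIsKernelOfCokernel
        (CokernelCofork.ofπ (cokernel.π u) (cokernel.condition u)) (cokernelIsCokernel u)
    have hku := isLimitForkMapOfIsLimit' (tensorRight (Qᘁ)) (cokernel.condition u) hu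
    exact Preadditive.mono_of_isZero_kernel' _ hku hUQd
  haveI : IsIso (q ▷ (Qᘁ)) := @isIso_of_mono_of_epi _ _ _ _ _ _ hmonoβ hepiβ
  -- Step d : a splitting s of q
  set τ : 𝟙_ P.C ⟶ (𝟙_ P.C) ⊗ (Qᘁ) := η_ Q (Qᘁ) ≫ inv (q ▷ (Qᘁ)) with hτdef
  have hτ : τ ≫ (q ▷ (Qᘁ)) = η_ Q (Qᘁ) := by simp [hτdef]
  have T2 : (τ ▷ Q) ≫ (α_ (𝟙_ P.C) (Qᘁ) Q).hom ≫ ((𝟙_ P.C) ◁ ε_ Q (Qᘁ)) ≫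
      (ρ_ (𝟙_ P.C)).hom ≫ q = (λ_ Q).hom := by
    have triangle := ExactPairing.evaluation_coevaluation Q (Qᘁ)
    rw [← hτ, comp_whiskerRight] at triangle
    have hassoc : ((q ▷ (Qᘁ)) ▷ Q) ≫ (α_ Q (Qᘁ) Q).hom
        = (α_ (𝟙_ P.C) (Qᘁ) Q).hom ≫ (q ▷ ((Qᘁ) ⊗ Q)) := by
      simpa using associator_naturality q (𝟙 (Qᘁ)) (𝟙 Q)
    have hexch : (q ▷ ((Qᘁ) ⊗ Q)) ≫ (Q ◁ ε_ Q (Qᘁ))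
        = ((𝟙_ P.C) ◁ ε_ Q (Qᘁ)) ≫ (q ▷ (𝟙_ P.C)) := (whisker_exchange q (ε_ Q (Qᘁ))).symm
    have hρ : q ▷ (𝟙_ P.C) = (ρ_ (𝟙_ P.C)).hom ≫ q ≫ (ρ_ Q).inv := by
      rw [← cancel_mono (ρ_ Q).hom]
      simp [MonoidalCategory.rightUnitor_naturality]
    rw [Category.assoc, reassoc_of% hassoc, hexch, hρ] at triangle
    rw [← cancel_mono (ρ_ Q).inv]
    simpa using triangle
  set s : Q ⟶ 𝟙_ P.C := (λ_ Q).inv ≫ (((τ ≫ (λ_ (Qᘁ)).hom)) ▷ Q) ≫ ε_ Q (Qᘁ) with hsdef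
  have hsq : s ≫ q = 𝟙 Q := by
    have claim2 : ((λ_ (Qᘁ)).hom ▷ Q) ≫ ε_ Q (Qᘁ)
        = (α_ (𝟙_ P.C) (Qᘁ) Q).hom ≫ ((𝟙_ P.C) ◁ ε_ Q (Qᘁ)) ≫ (ρ_ (𝟙_ P.C)).hom := by
      calc ((λ_ (Qᘁ)).hom ▷ Q) ≫ ε_ Q (Qᘁ)
          = (α_ (𝟙_ P.C) (Qᘁ) Q).hom ≫ (λ_ ((Qᘁ) ⊗ Q)).hom ≫ ε_ Q (Qᘁ) := by
            rw [MonoidalCategory.leftUnitor_tensor_hom]; simp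
        _ = (α_ (𝟙_ P.C) (Qᘁ) Q).hom ≫ ((𝟙_ P.C) ◁ ε_ Q (Qᘁ)) ≫ (λ_ (𝟙_ P.C)).hom := by
            rw [MonoidalCategory.leftUnitor_naturality]
        _ = (α_ (𝟙_ P.C) (Qᘁ) Q).hom ≫ ((𝟙_ P.C) ◁ ε_ Q (Qᘁ)) ≫ (ρ_ (𝟙_ P.C)).hom := by
            rw [MonoidalCategory.unitors_equal]
    rw [hsdef]
    simp only [comp_whiskerRight, Category.assoc]
    rw [reassoc_of% claim2, T2]
    simp
  -- Step e : the idempotent q ≫ s is 0 or 1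
  obtain ⟨a, ha0⟩ := P.endBij.2 (q ≫ s)
  have ha : a • 𝟙 (𝟙_ P.C) = q ≫ s := ha0
  have hidem : (q ≫ s) ≫ (q ≫ s) = q ≫ s := by
    rw [Category.assoc, reassoc_of% hsq]
  rw [← ha] at hidem
  have haa : a * a = a := by
    apply P.endBij.1
    simpa [Linear.smul_comp, Linear.comp_smul, smul_smul, mul_comm] using hidem
  rcases eq_or_ne a 0 with h0 | hne
  · right
    have hqs : q ≫ s = 0 := by rw [← ha, h0, zero_smul]
    have hQ0 : 𝟙 Q = 0 := by
      calc 𝟙 Q = (s ≫ q) ≫ (s ≫ q) := by rw [hsq]; simp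
        _ = s ≫ (q ≫ s) ≫ q := by simp
        _ = 0 := by rw [hqs]; simp
    have : cokernel.π u = 0 := by
      have hz : IsZero Q := by rw [IsZero.iff_id_eq_zero]; exact hQ0
      exact hz.eq_zero_of_tgt _
    haveI : Epi u := Abelian.epi_of_cokernel_π_eq_zero u this
    exact isIso_of_mono_of_epi u
  · left
    have ha1 : a = 1 := mul_left_cancel₀ hne (haa.trans (mul_one a).symm)
    have hq1 : q ≫ s = 𝟙 (𝟙_ P.C) := by rw [← ha, ha1, one_smul]
    calc u = u ≫ q ≫ s := by rw [hq1]; simp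
      _ = (u ≫ q) ≫ s := by simp
      _ = 0 := by rw [cokernel.condition]; simp

lemma unit_simple (P : PreTannakian k) : Simple (𝟙_ P.C) := by
  have hnz := unit_notZero P
  constructor
  intro Y f hf
  constructor
  · intro hiso hf0
    exact absurd (isZero_of_epi_eq_zero f hf0) hnz
  · intro hne
    rcases unit_mono_dichotomy f with h | h
    · exact absurd h hne
    · exact h

end OneCat

section Functors

variable {P Q : PreTannakian k} (H : TensorFunctor P Q)

lemma tf_reflects_isZero {W : P.C} (h : IsZero (H.toFunctor.obj W)) : IsZero W := by
  by_cases hι : kernel.ι (η_ W (Wᘁ)) = 0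
  · -- coevaluation is mono; contradiction with H W = 0
    exfalso
    haveI hmη : Mono (η_ W (Wᘁ)) := Preadditive.mono_of_kernel_zero hι
    haveI : Mono (H.toFunctor.map (η_ W (Wᘁ))) := Functor.map_mono _ _
    have hz1 : IsZero (H.toFunctor.obj (W ⊗ (Wᘁ))) :=
      (isZero_tensor_left h).of_iso (Functor.Monoidal.μIso H.toFunctor W (Wᘁ)).symm
    have hz2 : H.toFunctor.map (η_ W (Wᘁ)) = 0 := hz1.eq_zero_of_tgt _
    have hz3 : IsZero (H.toFunctor.obj (𝟙_ P.C)) :=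
      isZero_of_mono_eq_zero (H.toFunctor.map (η_ W (Wᘁ))) hz2
    exact unit_notZero Q (hz3.of_iso (Functor.Monoidal.εIso H.toFunctor))
  · -- kernel of coevaluation is everything; then W = 0 directly
    haveI := unit_simple P
    haveI : IsIso (kernel.ι (η_ W (Wᘁ))) := isIso_of_mono_of_nonzero hι
    have hη : η_ W (Wᘁ) = 0 := by
      apply (cancel_epi (kernel.ι (η_ W (Wᘁ)))).1
      rw [kernel.condition]; simp
    have triangle := ExactPairing.evaluation_coevaluation W (Wᘁ)
    rw [hη] at triangle
    simp only [MonoidalPreadditive.zero_whiskerRight, zero_comp] at triangle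
    rw [IsZero.iff_id_eq_zero]
    calc 𝟙 W = (λ_ W).inv ≫ ((λ_ W).hom ≫ (ρ_ W).inv) ≫ (ρ_ W).hom := by simp
      _ = (λ_ W).inv ≫ (0 : 𝟙_ P.C ⊗ W ⟶ W ⊗ 𝟙_ P.C) ≫ (ρ_ W).hom := by rw [← triangle]
      _ = 0 := by simp

lemma tf_map_eq_zero {A B : P.C} (f : A ⟶ B) (hf : H.toFunctor.map f = 0) : f = 0 := by
  have hfac : Abelian.factorThruImage f ≫ Abelian.image.ι f = f := Abelian.image.fac f
  have h1 : H.toFunctor.map (Abelian.factorThruImage f) ≫ H.toFunctor.map (Abelian.image.ι f)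
      = 0 := by rw [← Functor.map_comp, hfac, hf]
  haveI : Mono (H.toFunctor.map (Abelian.image.ι f)) := Functor.map_mono _ _
  have h2 : H.toFunctor.map (Abelian.factorThruImage f) = 0 := zero_of_comp_mono _ h1
  haveI : Epi (H.toFunctor.map (Abelian.factorThruImage f)) := Functor.map_epi _ _
  have h3 : IsZero (H.toFunctor.obj (Abelian.image f)) :=
    isZero_of_epi_eq_zero (H.toFunctor.map (Abelian.factorThruImage f)) h2
  have h4 : IsZero (Abelian.image f) := tf_reflects_isZero H h3
  rw [← hfac, h4.eq_zero_of_src (Abelian.image.ι f), comp_zero]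

lemma tf_faithful : H.toFunctor.Faithful := by
  constructor
  intro X Y f g hfg
  have : H.toFunctor.map (f - g) = 0 := by
    rw [Functor.map_sub, hfg, sub_self]
  have := tf_map_eq_zero H (f - g) this
  exact sub_eq_zero.1 this

end Functors

section Main

variable {D C : PreTannakian k} (F : TensorFunctor D C) (G : TensorFunctor C D)

/-- Subobject lifting: every subobject of `F X` is the image under `F` of a subobject of `X`. -/
lemma subobject_lift (e : F.toFunctor ⋙ G.toFunctor ≅ 𝟭 D.C) {S : C.C} {X : D.C} (m : S ⟶ F.toFunctor.obj X) [Mono m] :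
    ∃ (w : G.toFunctor.obj S ⟶ X), Mono w ∧
      ∃ χ : F.toFunctor.obj (G.toFunctor.obj S) ≅ S, χ.hom ≫ m = F.toFunctor.map w := by
  have hGf : G.toFunctor.Faithful := tf_faithful G
  set u' : G.toFunctor.obj S ⟶ X := G.toFunctor.map m ≫ (e.app X).hom with hu'def
  clear_value u'
  haveI : Mono (G.toFunctor.map m) := Functor.map_mono _ _
  haveI hmu' : Mono u' := by rw [hu'def]; exact mono_comp _ _
  haveI : Mono (F.toFunctor.map u') := Functor.map_mono _ _
  -- naturality computation
  have hnat : G.toFunctor.map (F.toFunctor.map u')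
      = (e.app (G.toFunctor.obj S)).hom ≫ G.toFunctor.map m := by
    apply (cancel_mono (e.app X).hom).1
    have h := e.hom.naturality u'
    simp only [Functor.comp_map, Functor.id_map, Functor.id_obj] at h
    simpa [hu'def] using h
  -- t ≫ cokernel.π m = 0
  have h1 : F.toFunctor.map u' ≫ cokernel.π m = 0 := by
    apply hGf.map_injective
    rw [Functor.map_comp, Functor.map_zero, hnat, Category.assoc, ← Functor.map_comp,
      cokernel.condition, Functor.map_zero, comp_zero]
  -- m ≫ cokernel.π (F.map u') = 0
  have h2 : m ≫ cokernel.π (F.toFunctor.map u') = 0 := by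
    apply hGf.map_injective
    have hGm : G.toFunctor.map m
        = (e.app (G.toFunctor.obj S)).inv ≫ G.toFunctor.map (F.toFunctor.map u') := by
      rw [hnat]; simp
    have hc : G.toFunctor.map (m ≫ cokernel.π (F.toFunctor.map u')) = 0 := by
      calc G.toFunctor.map (m ≫ cokernel.π (F.toFunctor.map u'))
          = G.toFunctor.map m ≫ G.toFunctor.map (cokernel.π (F.toFunctor.map u')) :=
            Functor.map_comp _ _ _
        _ = (e.app (G.toFunctor.obj S)).inv ≫ G.toFunctor.map (F.toFunctor.map u') ≫
              G.toFunctor.map (cokernel.π (F.toFunctor.map u')) := by rw [hGm, Category.assoc]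
        _ = (e.app (G.toFunctor.obj S)).inv ≫
              G.toFunctor.map (F.toFunctor.map u' ≫ cokernel.π (F.toFunctor.map u')) := by
            rw [Functor.map_comp]
        _ = (e.app (G.toFunctor.obj S)).inv ≫ G.toFunctor.map 0 := by rw [cokernel.condition]
        _ = 0 := by simp
    rw [hc, Functor.map_zero]
  -- the two lifts
  set ψ : F.toFunctor.obj (G.toFunctor.obj S) ⟶ S := Abelian.monoLift m (F.toFunctor.map u') h1
    with hψdef
  have hψ : ψ ≫ m = F.toFunctor.map u' := Abelian.monoLift_comp m _ h1
  set φ : S ⟶ F.toFunctor.obj (G.toFunctor.obj S) :=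
    Abelian.monoLift (F.toFunctor.map u') m h2 with hφdef
  have hφ : φ ≫ F.toFunctor.map u' = m := Abelian.monoLift_comp (F.toFunctor.map u') _ h2
  refine ⟨u', hmu', ⟨ψ, φ, ?_, ?_⟩, ?_⟩
  · apply (cancel_mono (F.toFunctor.map u')).1
    rw [Category.assoc, hφ, hψ, Category.id_comp]
  · apply (cancel_mono m).1
    rw [Category.assoc, hψ, hφ, Category.id_comp]
  · exact hψ

end Main

end IncompressibleAux

open IncompressibleAux in
/-- Let `D` be a pretannakian category over `k` which is subterminal (tensor functors into
`D` are unique up to monoidal natural isomorphism) and a Bezrukavnikov category (the class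
of categories fibred over `D` is stable under surjective tensor functors). Then `D` is
incompressible: every surjective tensor functor out of `D` is an equivalence. -/
theorem incompressible_of_subterminal_of_bezrukavnikov
    {k : Type u} [Field k] (D : PreTannakian k)
    (hsub : ∀ (C : PreTannakian k) (F G : TensorFunctor C D),
      ∃ e : F.toFunctor ≅ G.toFunctor, NatTrans.IsMonoidal e.hom)
    (hbez : ∀ (C₁ C₂ : PreTannakian k) (F : TensorFunctor C₁ C₂),
      F.Surjective → TensorFunctor C₁ D → Nonempty (TensorFunctor C₂ D)) :
    ∀ (C : PreTannakian k) (F : TensorFunctor D C),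
      F.Surjective → F.toFunctor.IsEquivalence := by
  intro C F hF
  -- the identity tensor functor on D
  let idD : TensorFunctor D D := { toFunctor := 𝟭 D.C }
  obtain ⟨G⟩ := hbez D C F hF idD
  letI : PreservesFiniteLimits (F.toFunctor ⋙ G.toFunctor) :=
    comp_preservesFiniteLimits _ _
  letI : PreservesFiniteColimits (F.toFunctor ⋙ G.toFunctor) :=
    comp_preservesFiniteColimits _ _
  let comp : TensorFunctor D D := { toFunctor := F.toFunctor ⋙ G.toFunctor }
  obtain ⟨e0, -⟩ := hsub D comp idD
  have e : F.toFunctor ⋙ G.toFunctor ≅ 𝟭 D.C := e0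
  have hGf : G.toFunctor.Faithful := tf_faithful G
  haveI hFfaith : F.toFunctor.Faithful := Functor.Faithful.of_comp_iso e
  haveI hFfull : F.toFunctor.Full := by
    constructor
    intro X Y f
    refine ⟨(e.app X).inv ≫ G.toFunctor.map f ≫ (e.app Y).hom, ?_⟩
    apply hGf.map_injective
    have h := e.hom.naturality ((e.app X).inv ≫ G.toFunctor.map f ≫ (e.app Y).hom)
    simp only [Functor.comp_map, Functor.id_map, Functor.id_obj] at h
    calc G.toFunctor.map (F.toFunctor.map ((e.app X).inv ≫ G.toFunctor.map f ≫ (e.app Y).hom))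
        = (G.toFunctor.map (F.toFunctor.map ((e.app X).inv ≫ G.toFunctor.map f ≫ (e.app Y).hom))
            ≫ e.hom.app Y) ≫ (e.app Y).inv := by simp
      _ = (e.hom.app X ≫ (e.app X).inv ≫ G.toFunctor.map f ≫ (e.app Y).hom) ≫ (e.app Y).inv := by
          rw [h]
      _ = G.toFunctor.map f := by simp
  haveI hFess : F.toFunctor.EssSurj := by
    constructor
    intro Z
    obtain ⟨X, S, m, p, hm, hp⟩ := hF Z
    haveI := hm
    haveI := hp
    obtain ⟨w₁, hw₁, χ₁, hχ₁⟩ := subobject_lift F G e m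
    -- q : F (G S) ⟶ Z is epi
    set q : F.toFunctor.obj (G.toFunctor.obj S) ⟶ Z := χ₁.hom ≫ p with hqdef
    haveI : Epi q := by rw [hqdef]; exact epi_comp _ _
    -- lift the kernel of q
    haveI : Mono (kernel.ι q) := inferInstance
    obtain ⟨w₂, hw₂, χ₂, hχ₂⟩ := subobject_lift F G e (kernel.ι q)
    haveI := hw₂
    -- Z is the cokernel of kernel.ι q
    have hcq : IsColimit (CokernelCofork.ofπ q (kernel.condition q)) :=
      Abelian.epiIsCokernelOfKernel (KernelFork.ofι (kernel.ι q) (kernel.condition q))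
        (kernelIsKernel q)
    have iso1 : cokernel (kernel.ι q) ≅ Z :=
      IsColimit.coconePointUniqueUpToIso (cokernelIsCokernel (kernel.ι q)) hcq
    have iso2 : cokernel (F.toFunctor.map w₂) ≅ cokernel (kernel.ι q) :=
      cokernel.mapIso _ _ χ₂ (Iso.refl _) (by rw [← hχ₂]; simp)
    have iso3 : F.toFunctor.obj (cokernel w₂) ≅ cokernel (F.toFunctor.map w₂) :=
      PreservesCokernel.iso F.toFunctor w₂
    exact ⟨cokernel w₂, ⟨iso3 ≪≫ iso2 ≪≫ iso1⟩⟩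
  exact { }
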